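/- Let X be a dg algebra and (i, p, h) a deformation retract of X onto a complex Y (so p∘i = 1, i∘p = 1 + ∂^X h + h ∂^X), where the homotopy h satisfies the generalized Leibniz rule h(αβ) ∈ h(α)X + X h(β) for all α, β ∈ X, and h∘i = 0. Then for all α, β ∈ Y one has (∂^X h + h ∂^X)(i(α)·i(β)) = 0. -/

import Mathlib

/-
Common setting: (X,dX) and (Y,dY) are nonnegatively graded chain complexes of
R-modules (internal grading by submodules with a direct sum decomposition),
X is a dg algebra, and (i, p, h) is a deformation retract of X onto Y.
-/
theorem key_vanishing {R X Y : Type*} [CommRing R]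
    [AddCommGroup X] [Module R X] [AddCommGroup Y] [Module R Y]
    -- gradings of the complexes X and Y
    (A : ℕ → Submodule R X) (B : ℕ → Submodule R Y)
    [DirectSum.Decomposition A] [DirectSum.Decomposition B]
    -- the differentials
    (dX : X →ₗ[R] X) (dY : Y →ₗ[R] Y)
    (hdX2 : dX ∘ₗ dX = 0) (hdY2 : dY ∘ₗ dY = 0)
    (hdXdeg : ∀ n : ℕ, ∀ x ∈ A (n + 1), dX x ∈ A n)
    (hdX0 : ∀ x ∈ A 0, dX x = 0)
    (hdYdeg : ∀ n : ℕ, ∀ y ∈ B (n + 1), dY y ∈ B n)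
    (hdY0 : ∀ y ∈ B 0, dY y = 0)
    -- the dg algebra structure on X : bilinear, unital, associative product
    -- compatible with the grading and satisfying the Leibniz rule
    (mul : X →ₗ[R] X →ₗ[R] X) (one : X) (hone : one ∈ A 0)
    (hone_l : ∀ x, mul one x = x) (hone_r : ∀ x, mul x one = x)
    (hassoc : ∀ x y z : X, mul (mul x y) z = mul x (mul y z))
    (hmuldeg : ∀ m n : ℕ, ∀ x ∈ A m, ∀ y ∈ A n, mul x y ∈ A (m + n))
    (hLeib : ∀ m : ℕ, ∀ x ∈ A m, ∀ y : X,
      dX (mul x y) = mul (dX x) y + ((-1 : ℤ) ^ m) • mul x (dX y))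
    -- the deformation retract (i, p, h)
    (i : Y →ₗ[R] X) (p : X →ₗ[R] Y) (h : X →ₗ[R] X)
    (hichain : dX ∘ₗ i = i ∘ₗ dY) (hpchain : dY ∘ₗ p = p ∘ₗ dX)
    (hideg : ∀ n : ℕ, ∀ y ∈ B n, i y ∈ A n)
    (hpdeg : ∀ n : ℕ, ∀ x ∈ A n, p x ∈ B n)
    (hhdeg : ∀ n : ℕ, ∀ x ∈ A n, h x ∈ A (n + 1))
    (hpi : p ∘ₗ i = LinearMap.id)
    (hip : i ∘ₗ p = LinearMap.id + dX ∘ₗ h + h ∘ₗ dX)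
    -- h satisfies the generalized Leibniz rule : h(ab) ∈ h(a)·X + X·h(b)
    (hgen : ∀ a b : X, ∃ u v : X, h (mul a b) = mul (h a) u + mul v (h b))
    -- h ∘ i = 0
    (hhi : h ∘ₗ i = 0) :
    -- the key vanishing : (dX ∘ h + h ∘ dX) (i α · i β) = 0
    ∀ α β : Y,
      dX (h (mul (i α) (i β))) + h (dX (mul (i α) (i β))) = 0 := by
  -- h vanishes on products of elements of the image of i
  have hi0 : ∀ a : Y, h (i a) = 0 := fun a => LinearMap.congr_fun hhi a
  have L : ∀ a b : Y, h (mul (i a) (i b)) = 0 := by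
    intro a b
    obtain ⟨u, v, huv⟩ := hgen (i a) (i b)
    rw [huv, hi0, hi0, map_zero, LinearMap.zero_apply, (mul v).map_zero, add_zero]
  intro α β
  rw [L, map_zero, zero_add]
  have hdXi : ∀ a : Y, dX (i a) = i (dY a) := fun a => LinearMap.congr_fun hichain a
  induction α using DirectSum.Decomposition.inductionOn B with
  | zero => simp
  | homogeneous m =>
      rename_i n
      have hiA : i (m : Y) ∈ A n := hideg n m m.2
      rw [hLeib n _ hiA, map_add, map_zsmul, hdXi, hdXi, L, L, smul_zero, add_zero]
  | add m m' hm hm' =>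
      rw [map_add i, map_add mul, LinearMap.add_apply, map_add dX, map_add h, hm, hm', add_zero]
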